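/- The function W_D(y) = 2·Σ_{i<j} ln(y_i² - y_j²) - ‖y‖²/2 on the open chamber {y ∈ ℝ^N : y_1 > ... > y_{N-1} > |y_N|} (restricted to y_N ≥ 0) attains its maximum at r if and only if r_N = 0 and 4·Σ_{j≠i} 1/(r_i² - r_j²) = 1 for all i = 1,...,N-1. -/

import Mathlib

open Finset

noncomputable def WD (n : ℕ) (y : Fin (n + 1) → ℝ) : ℝ :=
  2 * ∑ i, ∑ j ∈ Finset.univ.filter (fun j => i < j), Real.log (y i ^ 2 - y j ^ 2)
    - (∑ i, (y i) ^ 2) / 2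

/-- The open chamber `y₁ > … > y_{N-1} > |y_N|` restricted to `y_N ≥ 0`. -/
def InChamberD (n : ℕ) (y : Fin (n + 1) → ℝ) : Prop :=
  (∀ i j : Fin (n + 1), i < j → j ≠ Fin.last n → y j < y i) ∧
    (∀ i : Fin (n + 1), i ≠ Fin.last n → |y (Fin.last n)| < y i) ∧
    0 ≤ y (Fin.last n)

namespace StmtAux

lemma chamber_pos' {n : ℕ} {y : Fin (n+1) → ℝ} (hy : InChamberD n y)
    {i : Fin (n+1)} (h : i ≠ Fin.last n) : 0 < y i :=
  lt_of_le_of_lt (abs_nonneg _) (hy.2.1 i h)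

lemma chamber_sq' {n : ℕ} {y : Fin (n+1) → ℝ} (hy : InChamberD n y)
    {i j : Fin (n+1)} (h : i < j) : y j ^ 2 < y i ^ 2 := by
  have hi : i ≠ Fin.last n := (lt_of_lt_of_le h (Fin.le_last j)).ne
  rcases eq_or_ne j (Fin.last n) with hj | hj
  · have h1 := hy.2.1 i hi
    rw [← hj] at h1
    calc y j ^ 2 = |y j| ^ 2 := (sq_abs _).symm
      _ < y i ^ 2 := by exact pow_lt_pow_left₀ h1 (abs_nonneg _) (by norm_num)
  · exact pow_lt_pow_left₀ (hy.1 i j h hj) (chamber_pos' hy hj).le (by norm_num)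

lemma lt_last_of_ne {n : ℕ} {j : Fin (n+1)} (h : j ≠ Fin.last n) : j < Fin.last n :=
  lt_of_le_of_ne (Fin.le_last j) h

lemma chamber_ne_sq {n : ℕ} {r : Fin (n+1) → ℝ} (hr : InChamberD n r) (i0 : Fin (n+1)) :
    ∀ j, j ≠ i0 → r i0 ^ 2 - r j ^ 2 ≠ 0 := by
  intro j hj
  rcases lt_or_gt_of_ne hj with h | h
  · have := chamber_sq' hr h
    intro hc; linarith
  · have := chamber_sq' hr h
    intro hc; linarith

lemma double_sum {N : ℕ} (g : Fin N → Fin N → ℝ) :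
    ∑ i, ∑ j ∈ Finset.univ.filter (fun j => i < j), (g i j + g j i)
      = ∑ i, ∑ j ∈ Finset.univ.erase i, g i j := by
  have h1 : ∑ i, ∑ j ∈ Finset.univ.filter (fun j => i < j), g j i
      = ∑ i, ∑ j ∈ Finset.univ.filter (fun j => j < i), g i j :=
    Finset.sum_comm' (by intro x y; simp)
  simp_rw [Finset.sum_add_distrib]
  rw [h1, ← Finset.sum_add_distrib]
  refine Finset.sum_congr rfl fun i _ => ?_
  have e1 : (Finset.univ.erase i).filter (fun j => i < j)
      = Finset.univ.filter (fun j => i < j) := by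
    ext j
    simp only [Finset.mem_filter, Finset.mem_erase, Finset.mem_univ, true_and, and_true]
    exact ⟨fun h => h.2, fun h => ⟨ne_of_gt h, h⟩⟩
  have e2 : (Finset.univ.erase i).filter (fun j => ¬ i < j)
      = Finset.univ.filter (fun j => j < i) := by
    ext j
    simp only [Finset.mem_filter, Finset.mem_erase, Finset.mem_univ, true_and, and_true]
    exact ⟨fun h => lt_of_le_of_ne (not_lt.mp h.2) h.1, fun h => ⟨ne_of_lt h, not_lt.mpr h.le⟩⟩
  rw [← Finset.sum_filter_add_sum_filter_not (Finset.univ.erase i) (fun j => i < j), e1, e2]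

lemma hasDerivAt_WD {n : ℕ} (r : Fin (n+1) → ℝ) (i0 : Fin (n+1))
    (hd : ∀ j, j ≠ i0 → r i0 ^ 2 - r j ^ 2 ≠ 0) :
    HasDerivAt (fun t => WD n (Function.update r i0 t))
      (4 * r i0 * (∑ j ∈ Finset.univ.erase i0, (r i0 ^ 2 - r j ^ 2)⁻¹) - r i0) (r i0) := by
  have hfun : (fun t => WD n (Function.update r i0 t)) =
      fun t => 2 * ∑ i, ∑ j ∈ Finset.univ.filter (fun j => i < j),
        Real.log ((if i = i0 then t else r i) ^ 2 - (if j = i0 then t else r j) ^ 2)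
        - (∑ i, (if i = i0 then t else r i) ^ 2) / 2 := by
    funext t
    simp [WD, Function.update_apply]
  rw [hfun]
  set e : Fin (n+1) → Fin (n+1) → ℝ := fun i j =>
    (if i = i0 then 2 * r i0 * (r i0 ^ 2 - r j ^ 2)⁻¹ else 0)
    + (if j = i0 then 2 * r i0 * (r i0 ^ 2 - r i ^ 2)⁻¹ else 0) with he
  have hsum : HasDerivAt (fun t => ∑ i, ∑ j ∈ Finset.univ.filter (fun j => i < j),
        Real.log ((if i = i0 then t else r i) ^ 2 - (if j = i0 then t else r j) ^ 2))
      (∑ i, ∑ j ∈ Finset.univ.filter (fun j => i < j), e i j) (r i0) := by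
    apply HasDerivAt.fun_sum
    intro i _
    apply HasDerivAt.fun_sum
    intro j hj
    have hij : i < j := by simpa using hj
    by_cases hi : i = i0
    · have hjne : j ≠ i0 := fun h => (hij.ne) (hi.trans h.symm)
      simp only [hi, if_pos rfl, if_neg hjne, he]
      have h1 : HasDerivAt (fun t : ℝ => t ^ 2 - r j ^ 2) (2 * r i0) (r i0) := by
        simpa using (hasDerivAt_pow 2 (r i0)).sub_const (r j ^ 2)
      have h2 := h1.log (hd j hjne)
      convert h2 using 1
      case e'_4 => rfl
      case e'_5 => rfl
      case e'_8 => simp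
      rw [div_eq_mul_inv]
      ring_nf
      simp
    · by_cases hj' : j = i0
      · simp only [hj', if_pos rfl, if_neg hi, he]
        have h1 : HasDerivAt (fun t : ℝ => r i ^ 2 - t ^ 2) (-(2 * r i0)) (r i0) := by
          simpa using (hasDerivAt_pow 2 (r i0)).const_sub (r i ^ 2)
        have hne := hd i hi
        have h2 := h1.log (fun hc => hne (by linarith))
        convert h2 using 1
        case e'_4 => rfl
        case e'_5 => rfl
        case e'_8 => simp
        rw [show r i ^ 2 - r i0 ^ 2 = -(r i0 ^ 2 - r i ^ 2) by ring, div_neg, neg_div,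
          neg_neg, div_eq_mul_inv]
        ring_nf
        simp
      · simp only [if_neg hi, if_neg hj', he]
        simpa using hasDerivAt_const (r i0) (Real.log (r i ^ 2 - r j ^ 2))
  have hq : HasDerivAt (fun t => ∑ i, (if i = i0 then t else r i) ^ 2)
      (∑ i, (if i = i0 then (2 : ℝ) * r i0 else 0)) (r i0) := by
    apply HasDerivAt.fun_sum
    intro i _
    by_cases hi : i = i0
    · simp only [hi, if_pos rfl]
      simpa using hasDerivAt_pow 2 (r i0)
    · simp only [if_neg hi]
      exact hasDerivAt_const _ _
  have := (hsum.const_mul 2).fun_sub (hq.div_const 2)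
  convert this using 1
  case e'_4 => rfl
  case e'_5 => rfl
  have hee : ∑ i, ∑ j ∈ Finset.univ.filter (fun j => i < j), e i j
      = ∑ j ∈ Finset.univ.erase i0, 2 * r i0 * (r i0 ^ 2 - r j ^ 2)⁻¹ := by
    rw [show (∑ i, ∑ j ∈ Finset.univ.filter (fun j => i < j), e i j)
        = ∑ i, ∑ j ∈ Finset.univ.filter (fun j => i < j),
          ((fun i j => if i = i0 then 2 * r i0 * (r i0 ^ 2 - r j ^ 2)⁻¹ else 0) i j
            + (fun i j => if i = i0 then 2 * r i0 * (r i0 ^ 2 - r j ^ 2)⁻¹ else 0) j i) from rfl,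
      double_sum]
    rw [Finset.sum_eq_single i0]
    · simp
    · intro b _ hb; simp [hb]
    · simp
  rw [hee, Finset.sum_ite_eq' Finset.univ i0]
  simp [Finset.mul_sum]
  exact Finset.sum_congr rfl fun x _ => by ring

lemma eventually_chamber_ne {n : ℕ} {r : Fin (n+1) → ℝ} (hr : InChamberD n r)
    {i0 : Fin (n+1)} (hi0 : i0 ≠ Fin.last n) :
    ∀ᶠ t in nhds (r i0), InChamberD n (Function.update r i0 t) := by
  obtain ⟨h1, h2, h3⟩ := hr
  have hl : ∀ t : ℝ, Function.update r i0 t (Fin.last n) = r (Fin.last n) :=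
    fun t => Function.update_of_ne (Ne.symm hi0) _ _
  refine Filter.Eventually.and ?_ (Filter.Eventually.and ?_ ?_)
  · rw [Filter.eventually_all]
    intro i
    rw [Filter.eventually_all]
    intro j
    by_cases hij : i < j
    · by_cases hjl : j = Fin.last n
      · filter_upwards with t h h'; exact absurd hjl h'
      · by_cases hi : i = i0
        · subst hi
          have hjne : j ≠ i := hij.ne'
          filter_upwards [Ioi_mem_nhds (h1 i j hij hjl)] with t ht _ _
          rw [Function.update_of_ne hjne, Function.update_self]
          exact ht
        · by_cases hj : j = i0
          · subst hj
            filter_upwards [Iio_mem_nhds (h1 i j hij hjl)] with t ht _ _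
            rw [Function.update_of_ne (fun hc : i = j => hi hc), Function.update_self]
            exact ht
          · filter_upwards with t _ _
            rw [Function.update_of_ne hi, Function.update_of_ne hj]
            exact h1 i j hij hjl
    · filter_upwards with t h; exact absurd h hij
  · rw [Filter.eventually_all]
    intro i
    by_cases hil : i = Fin.last n
    · filter_upwards with t h; exact absurd hil h
    · by_cases hi : i = i0
      · subst hi
        filter_upwards [Ioi_mem_nhds (h2 i hil)] with t ht _
        rw [hl t, Function.update_self]
        exact ht
      · filter_upwards with t _
        rw [hl t, Function.update_of_ne hi]
        exact h2 i hil
  · filter_upwards with t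
    rw [hl t]
    exact h3

lemma eventually_chamber_last {n : ℕ} {r : Fin (n+1) → ℝ} (hr : InChamberD n r)
    (h0 : 0 < r (Fin.last n)) :
    ∀ᶠ t in nhds (r (Fin.last n)), InChamberD n (Function.update r (Fin.last n) t) := by
  obtain ⟨h1, h2, h3⟩ := hr
  refine Filter.Eventually.and ?_ (Filter.Eventually.and ?_ ?_)
  · filter_upwards with t
    intro i j hij hjl
    have hil : i ≠ Fin.last n := (lt_of_lt_of_le hij (Fin.le_last j)).ne
    rw [Function.update_of_ne hjl, Function.update_of_ne hil]
    exact h1 i j hij hjl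
  · rw [Filter.eventually_all]
    intro i
    by_cases hil : i = Fin.last n
    · filter_upwards with t h; exact absurd hil h
    · have hb := h2 i hil
      obtain ⟨ha, hb'⟩ := abs_lt.mp hb
      filter_upwards [Ioo_mem_nhds ha hb'] with t ht _
      rw [Function.update_self, Function.update_of_ne hil]
      exact abs_lt.mpr ht
  · filter_upwards [Ioi_mem_nhds h0] with t ht
    rw [Function.update_self]
    exact ht.le

end StmtAux

open StmtAux in
theorem stmt_13 (n : ℕ) (r : Fin (n + 1) → ℝ) (hr : InChamberD n r) :
    (∀ y : Fin (n + 1) → ℝ, InChamberD n y → WD n y ≤ WD n r) ↔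
      (r (Fin.last n) = 0 ∧
        ∀ i : Fin (n + 1), i ≠ Fin.last n →
          4 * ∑ j ∈ Finset.univ.erase i, 1 / (r i ^ 2 - r j ^ 2) = 1) := by
  constructor
  · intro hmax
    have localmax : ∀ i0 : Fin (n+1),
        (∀ᶠ t in nhds (r i0), InChamberD n (Function.update r i0 t)) →
        4 * r i0 * (∑ j ∈ Finset.univ.erase i0, (r i0 ^ 2 - r j ^ 2)⁻¹) - r i0 = 0 := by
      intro i0 hev
      have hloc : IsLocalMax (fun t => WD n (Function.update r i0 t)) (r i0) := by
        filter_upwards [hev] with t ht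
        show WD n (Function.update r i0 t) ≤ WD n (Function.update r i0 (r i0))
        rw [Function.update_eq_self]
        exact hmax _ ht
      have hder := hasDerivAt_WD r i0 (chamber_ne_sq hr i0)
      have hz := hloc.deriv_eq_zero
      rw [hder.deriv] at hz
      exact hz
    have hlast : r (Fin.last n) = 0 := by
      by_contra h0'
      have h0 : 0 < r (Fin.last n) := lt_of_le_of_ne hr.2.2 (Ne.symm h0')
      have hz := localmax (Fin.last n) (eventually_chamber_last hr h0)
      have hS : (∑ j ∈ Finset.univ.erase (Fin.last n),
          (r (Fin.last n) ^ 2 - r j ^ 2)⁻¹) ≤ 0 := by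
        apply Finset.sum_nonpos
        intro j hj
        have hjl : j ≠ Fin.last n := (Finset.mem_erase.mp hj).1
        have := chamber_sq' hr (lt_last_of_ne hjl)
        exact inv_nonpos.mpr (by linarith)
      nlinarith
    refine ⟨hlast, ?_⟩
    intro i0 hi0
    have hz := localmax i0 (eventually_chamber_ne hr hi0)
    have hpos : 0 < r i0 := chamber_pos' hr hi0
    have h4 : r i0 * (4 * (∑ j ∈ Finset.univ.erase i0, (r i0 ^ 2 - r j ^ 2)⁻¹) - 1) = 0 := by
      linear_combination hz
    rcases mul_eq_zero.mp h4 with h | h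
    · exact absurd h hpos.ne'
    · simp only [one_div]
      linarith
  · rintro ⟨h0, hcrit⟩ y hy
    set d : Fin (n+1) → ℝ := fun i => y i ^ 2 - r i ^ 2 with hd
    set c : Fin (n+1) → Fin (n+1) → ℝ := fun i j => (r i ^ 2 - r j ^ 2)⁻¹ with hc
    have hpair : ∀ i j : Fin (n+1), i < j →
        Real.log (y i ^ 2 - y j ^ 2) - Real.log (r i ^ 2 - r j ^ 2) ≤ (d i - d j) * c i j := by
      intro i j hij
      have hR : 0 < r i ^ 2 - r j ^ 2 := sub_pos.mpr (chamber_sq' hr hij)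
      have hY : 0 < y i ^ 2 - y j ^ 2 := sub_pos.mpr (chamber_sq' hy hij)
      have hlog := Real.log_le_sub_one_of_pos (div_pos hY hR)
      rw [Real.log_div hY.ne' hR.ne'] at hlog
      have heq : (y i ^ 2 - y j ^ 2) / (r i ^ 2 - r j ^ 2) - 1 = (d i - d j) * c i j := by
        rw [hd, hc]
        field_simp
        ring
      rw [← heq]
      exact hlog
    have expand : WD n y - WD n r
        = 2 * (∑ i, ∑ j ∈ Finset.univ.filter (fun j => i < j),
            (Real.log (y i ^ 2 - y j ^ 2) - Real.log (r i ^ 2 - r j ^ 2)))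
          - (∑ i, d i) / 2 := by
      simp only [WD, hd]
      simp_rw [Finset.sum_sub_distrib]
      ring
    have step1 : (∑ i, ∑ j ∈ Finset.univ.filter (fun j => i < j),
            (Real.log (y i ^ 2 - y j ^ 2) - Real.log (r i ^ 2 - r j ^ 2)))
        ≤ ∑ i, ∑ j ∈ Finset.univ.filter (fun j => i < j), ((d i - d j) * c i j) := by
      apply Finset.sum_le_sum
      intro i _
      apply Finset.sum_le_sum
      intro j hj
      exact hpair i j (by simpa using hj)
    have step2 : (∑ i, ∑ j ∈ Finset.univ.filter (fun j => i < j), ((d i - d j) * c i j))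
        = ∑ i, d i * (∑ j ∈ Finset.univ.erase i, c i j) := by
      rw [show (∑ i, ∑ j ∈ Finset.univ.filter (fun j => i < j), ((d i - d j) * c i j))
          = ∑ i, ∑ j ∈ Finset.univ.filter (fun j => i < j),
            ((fun i j => d i * c i j) i j + (fun i j => d i * c i j) j i) from ?_,
        double_sum]
      · exact Finset.sum_congr rfl fun i _ => (Finset.mul_sum _ _ _).symm
      · refine Finset.sum_congr rfl fun i _ => Finset.sum_congr rfl fun j _ => ?_
        show (d i - d j) * c i j = d i * c i j + d j * c j i
        rw [hc]
        show (d i - d j) * (r i ^ 2 - r j ^ 2)⁻¹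
          = d i * (r i ^ 2 - r j ^ 2)⁻¹ + d j * (r j ^ 2 - r i ^ 2)⁻¹
        rw [show r j ^ 2 - r i ^ 2 = -(r i ^ 2 - r j ^ 2) by ring, inv_neg]
        ring
    have key : WD n y - WD n r
        ≤ ∑ i, d i * (2 * (∑ j ∈ Finset.univ.erase i, c i j) - 1/2) := by
      rw [expand]
      calc 2 * (∑ i, ∑ j ∈ Finset.univ.filter (fun j => i < j),
            (Real.log (y i ^ 2 - y j ^ 2) - Real.log (r i ^ 2 - r j ^ 2))) - (∑ i, d i) / 2
          ≤ 2 * (∑ i, ∑ j ∈ Finset.univ.filter (fun j => i < j), ((d i - d j) * c i j))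
            - (∑ i, d i) / 2 := by linarith
        _ = ∑ i, d i * (2 * (∑ j ∈ Finset.univ.erase i, c i j) - 1/2) := by
            rw [step2, Finset.mul_sum, Finset.sum_div, ← Finset.sum_sub_distrib]
            exact Finset.sum_congr rfl fun i _ => by ring
    have hnp : (∑ i, d i * (2 * (∑ j ∈ Finset.univ.erase i, c i j) - 1/2)) ≤ 0 := by
      apply Finset.sum_nonpos
      intro i _
      by_cases hi : i = Fin.last n
      · subst hi
        have hdnn : 0 ≤ d (Fin.last n) := by
          show (0:ℝ) ≤ y (Fin.last n) ^ 2 - r (Fin.last n) ^ 2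
          rw [h0]
          simpa using sq_nonneg (y (Fin.last n))
        have hSnp : (∑ j ∈ Finset.univ.erase (Fin.last n), c (Fin.last n) j) ≤ 0 := by
          apply Finset.sum_nonpos
          intro j hj
          have hjl : j ≠ Fin.last n := (Finset.mem_erase.mp hj).1
          have hpos := chamber_pos' hr hjl
          rw [hc]
          show (r (Fin.last n) ^ 2 - r j ^ 2)⁻¹ ≤ 0
          rw [h0]
          exact inv_nonpos.mpr (by nlinarith)
        exact mul_nonpos_of_nonneg_of_nonpos hdnn (by linarith)
      · have h4 : 4 * (∑ j ∈ Finset.univ.erase i, c i j) = 1 := by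
          have := hcrit i hi
          simp only [one_div] at this
          exact this
        have : 2 * (∑ j ∈ Finset.univ.erase i, c i j) - 1/2 = 0 := by linarith
        rw [this, mul_zero]
    linarith
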